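/- Let α ∈ [0,1] be a real number, let p be a prime, z a positive integer, and n = p^z with n ≥ 3. Let D_{2n} = ⟨a, b | a^n = b² = e, bab = a^{−1}⟩ be the dihedral group of order 2n. Then αn − 1 is an eigenvalue of A_α(P(D_{2n})) whose eigenspace has dimension at least n − 2, and α is an eigenvalue of A_α(P(D_{2n})) whose eigenspace has dimension at least n − 1. -/

import Mathlib

open Matrix Polynomial BigOperators

/-- The generalized adjacency matrix `A_α(G) = α·D(G) + (1−α)·A(G)`. -/
noncomputable def Aalpha {V : Type*} [Fintype V] (G : SimpleGraph V) (α : ℝ) :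
    Matrix V V ℝ :=
  letI := Classical.decEq V
  letI := Classical.decRel G.Adj
  α • Matrix.diagonal (fun v => (G.degree v : ℝ)) + (1 - α) • G.adjMatrix ℝ

/-- `μ` is an eigenvalue of the real matrix `M`. -/
def Matrix.IsEigenvalue {n : Type*} [Fintype n] (M : Matrix n n ℝ) (μ : ℝ) : Prop :=
  ∃ v : n → ℝ, v ≠ 0 ∧ M.mulVec v = μ • v

/-- The dimension of the eigenspace of a real matrix `M` for the value `μ`. -/
noncomputable def eigMult {n : Type*} [Fintype n] (M : Matrix n n ℝ) (μ : ℝ) : ℕ :=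
  letI := Classical.decEq n
  Module.finrank ℝ (Module.End.eigenspace (Matrix.toLin' M) μ)

/-- The joined union `G[G_1, …, G_n]`. -/
def joinedUnion {n : ℕ} (G : SimpleGraph (Fin n)) (V : Fin n → Type*)
    (Gs : ∀ i, SimpleGraph (V i)) : SimpleGraph (Σ i, V i) :=
  SimpleGraph.fromRel (fun x y =>
    if h : x.1 = y.1 then (Gs y.1).Adj (h ▸ x.2) y.2 else G.Adj x.1 y.1)

/-- The join `G ∇ H` of two graphs. -/
def graphJoin {V W : Type*} (G : SimpleGraph V) (H : SimpleGraph W) :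
    SimpleGraph (V ⊕ W) :=
  SimpleGraph.fromRel (fun x y =>
    match x, y with
    | Sum.inl a, Sum.inl b => G.Adj a b
    | Sum.inr a, Sum.inr b => H.Adj a b
    | _, _ => True)

/-- The disjoint union `G ∪ H` of two graphs. -/
def disjUnion {V W : Type*} (G : SimpleGraph V) (H : SimpleGraph W) :
    SimpleGraph (V ⊕ W) :=
  SimpleGraph.fromRel (fun x y =>
    match x, y with
    | Sum.inl a, Sum.inl b => G.Adj a b
    | Sum.inr a, Sum.inr b => H.Adj a b
    | _, _ => False)

/-- Degree of a vertex (classical version). -/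
noncomputable def gdegree {V : Type*} [Fintype V] (G : SimpleGraph V) (v : V) : ℕ :=
  letI := Classical.decEq V
  letI := Classical.decRel G.Adj
  G.degree v

/-- The power graph of a group. -/
def powerGraph (G : Type*) [Group G] : SimpleGraph G :=
  SimpleGraph.fromRel (fun x y => ∃ k : ℕ, 0 < k ∧ y = x ^ k)

namespace Stmt18Aux
open DihedralGroup

variable {n : ℕ}

lemma r_pow' (i : ZMod n) (k : ℕ) : (r i : DihedralGroup n)^k = r ((k : ZMod n) * i) := by
  induction k with
  | zero => simp
  | succ m ih => rw [pow_succ, ih, r_mul_r]; push_cast; ring_nf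

lemma sr_pow' (i : ZMod n) (k : ℕ) :
    (sr i : DihedralGroup n)^k = 1 ∨ (sr i : DihedralGroup n)^k = sr i := by
  induction k with
  | zero => left; rfl
  | succ m ih => rcases ih with h | h <;> rw [pow_succ, h] <;> simp [r_mul_sr, sr_mul_sr]

lemma sub1 [NeZero n] (a b : ℕ) (h : Nat.gcd a n ∣ b) :
    ∃ k : ℕ, (b : ZMod n) = (k : ZMod n) * (a : ZMod n) := by
  have hg : ((Nat.gcd a n : ℤ) : ZMod n) = ((Nat.gcdA a n : ℤ) : ZMod n) * (a : ZMod n) := by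
    rw [Nat.gcd_eq_gcd_ab]
    push_cast [ZMod.natCast_self]
    ring
  obtain ⟨m, hm⟩ := h
  set c : ℤ := m * Nat.gcdA a n with hc
  have hb : (b : ZMod n) = (c : ZMod n) * (a : ZMod n) := by
    rw [hm]; push_cast
    rw [hc]; push_cast
    calc ((Nat.gcd a n : ZMod n)) * (m : ZMod n)
        = (m : ZMod n) * ((Nat.gcd a n : ℤ) : ZMod n) := by push_cast; ring
      _ = _ := by rw [hg]; ring
  refine ⟨(c : ZMod n).val, ?_⟩
  rw [hb]
  congr 1
  push_cast [ZMod.natCast_val, ZMod.cast_id]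
  norm_cast

lemma sub2 [NeZero n] (i j : ZMod n) (h : Nat.gcd i.val n ∣ j.val) :
    ∃ k : ℕ, 0 < k ∧ j = (k : ZMod n) * i := by
  obtain ⟨k, hk⟩ := sub1 i.val j.val h
  have hn : 0 < n := Nat.pos_of_ne_zero (NeZero.ne n)
  refine ⟨k + n, by omega, ?_⟩
  have h2 : ((k + n : ℕ) : ZMod n) = (k : ZMod n) := by push_cast [ZMod.natCast_self]; ring
  simp only [ZMod.natCast_val, ZMod.cast_id] at hk
  rw [h2, ← hk]

lemma comparable (p z : ℕ) (hp : p.Prime) (hn : n = p ^ z) [NeZero n] (i j : ZMod n) :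
    (∃ k : ℕ, 0 < k ∧ j = (k : ZMod n) * i) ∨ (∃ k : ℕ, 0 < k ∧ i = (k : ZMod n) * j) := by
  have hi : Nat.gcd i.val n ∣ p ^ z := by rw [← hn]; exact Nat.gcd_dvd_right _ _
  have hj : Nat.gcd j.val n ∣ p ^ z := by rw [← hn]; exact Nat.gcd_dvd_right _ _
  obtain ⟨s, hs, hgs⟩ := (Nat.dvd_prime_pow hp).mp hi
  obtain ⟨t, ht, hgt⟩ := (Nat.dvd_prime_pow hp).mp hj
  rcases le_total s t with h | h
  · refine Or.inl (sub2 i j (dvd_trans ?_ (Nat.gcd_dvd_left j.val n)))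
    rw [hgs, hgt]; exact pow_dvd_pow p h
  · refine Or.inr (sub2 j i (dvd_trans ?_ (Nat.gcd_dvd_left i.val n)))
    rw [hgt, hgs]; exact pow_dvd_pow p h

lemma adj_rr (p z : ℕ) (hp : p.Prime) (hn : n = p ^ z) [NeZero n] (i j : ZMod n) :
    (powerGraph (DihedralGroup n)).Adj (r i) (r j) ↔ i ≠ j := by
  rw [powerGraph, SimpleGraph.fromRel_adj]
  constructor
  · rintro ⟨hne, -⟩ rfl; exact hne rfl
  · intro hij
    refine ⟨by simpa using hij, ?_⟩
    rcases comparable p z hp hn i j with ⟨k, hk, he⟩ | ⟨k, hk, he⟩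
    · exact Or.inl ⟨k, hk, by rw [r_pow', ← he]⟩
    · exact Or.inr ⟨k, hk, by rw [r_pow', ← he]⟩

lemma adj_rsr (i j : ZMod n) :
    (powerGraph (DihedralGroup n)).Adj (r i) (sr j) ↔ i = 0 := by
  rw [powerGraph, SimpleGraph.fromRel_adj]
  constructor
  · rintro ⟨-, ⟨k, -, he⟩ | ⟨k, -, he⟩⟩
    · rw [r_pow'] at he; exact absurd he (by simp)
    · rcases sr_pow' j k with h | h <;> rw [h] at he
      · exact ((by rw [← r_zero] at he; simpa [-r_zero] using he.symm : (0:ZMod n) = i)).symm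
      · exact absurd he (by simp)
  · rintro rfl
    exact ⟨by simp [-r_zero], Or.inr ⟨2, by norm_num, by rw [pow_two, sr_mul_sr]; simp⟩⟩

lemma adj_srr (i j : ZMod n) :
    (powerGraph (DihedralGroup n)).Adj (sr j) (r i) ↔ i = 0 := by
  rw [SimpleGraph.adj_comm]; exact adj_rsr i j

lemma not_adj_srsr (i j : ZMod n) : ¬ (powerGraph (DihedralGroup n)).Adj (sr i) (sr j) := by
  rw [powerGraph, SimpleGraph.fromRel_adj]
  rintro ⟨hne, ⟨k, -, he⟩ | ⟨k, -, he⟩⟩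
  · rcases sr_pow' i k with h | h <;> rw [h] at he
    · exact absurd he.symm (by rw [← r_zero]; simp [-r_zero])
    · exact hne (by simp_all)
  · rcases sr_pow' j k with h | h <;> rw [h] at he
    · exact absurd he.symm (by rw [← r_zero]; simp [-r_zero])
    · exact hne (by simp_all)

lemma deg_sr [NeZero n] (i : ZMod n)
    [Fintype ((powerGraph (DihedralGroup n)).neighborSet (sr i))] :
    (powerGraph (DihedralGroup n)).degree (sr i) = 1 := by
  classical
  rw [SimpleGraph.degree]
  have h : (powerGraph (DihedralGroup n)).neighborFinset (sr i) = {r 0} := by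
    ext y
    rw [SimpleGraph.mem_neighborFinset]
    cases y with
    | r j => simp [adj_srr, ← r_zero, -r_zero]
    | sr j => simp [not_adj_srsr, ← r_zero, -r_zero]
  rw [h, Finset.card_singleton]

lemma r_injective : Function.Injective (r : ZMod n → DihedralGroup n) := by
  intro a b h; simpa using h

lemma deg_r (p z : ℕ) (hp : p.Prime) (hnpz : n = p ^ z) [NeZero n] (j : ZMod n) (hj : j ≠ 0)
    [Fintype ((powerGraph (DihedralGroup n)).neighborSet (r j))] :
    (powerGraph (DihedralGroup n)).degree (r j) = n - 1 := by
  classical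
  rw [SimpleGraph.degree]
  have h : (powerGraph (DihedralGroup n)).neighborFinset (r j) = Finset.image r ({j}ᶜ) := by
    ext y
    rw [SimpleGraph.mem_neighborFinset]
    cases y with
    | r k =>
      simp only [adj_rr p z hp hnpz, Finset.mem_image, Finset.mem_compl,
        Finset.mem_singleton]
      constructor
      · intro hjk; exact ⟨k, fun hkj => hjk hkj.symm, rfl⟩
      · rintro ⟨a, ha, haa⟩ rfl
        exact ha (r_injective haa)
    | sr k =>
      simp [adj_rsr, hj]
  rw [h, Finset.card_image_of_injective _ r_injective, Finset.card_compl,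
    Finset.card_singleton, ZMod.card]

end Stmt18Aux

section RankAux

lemma rank_aux {V ι : Type*} [Fintype V] [Fintype ι] [DecidableEq V] [DecidableEq ι]
    (M : Matrix V V ℝ) (μ : ℝ) (x : ι → V) (b : V)
    (hx : Function.Injective x) (hb : ∀ i, x i ≠ b)
    (hev : ∀ i, M.mulVec (fun y => (if y = x i then (1:ℝ) else 0) - (if y = b then 1 else 0))
      = μ • (fun y => (if y = x i then (1:ℝ) else 0) - (if y = b then 1 else 0))) :
    Fintype.card ι ≤ eigMult M μ := by
  unfold eigMult
  set S := Module.End.eigenspace (Matrix.toLin' M) μ with hS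
  set W : ι → (V → ℝ) :=
    fun i => (fun y => (if y = x i then (1:ℝ) else 0) - (if y = b then 1 else 0)) with hW
  have hmem : ∀ i, W i ∈ S := by
    intro i
    rw [hS, Module.End.mem_eigenspace_iff, Matrix.toLin'_apply]
    exact hev i
  have hliW : LinearIndependent ℝ W := by
    rw [Fintype.linearIndependent_iff]
    intro g hg i
    have h := congrFun hg (x i)
    simp only [Finset.sum_apply, Pi.smul_apply, hW, smul_eq_mul, Pi.zero_apply] at h
    rw [Finset.sum_congr rfl (fun j _ => ?_)] at h
    · rwa [Finset.sum_ite_eq' Finset.univ i g, if_pos (Finset.mem_univ i)] at h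
    · show g j * ((if x i = x j then (1:ℝ) else 0) - (if x i = b then 1 else 0))
        = if j = i then g j else 0
      rw [if_neg (hb i)]
      by_cases hij : j = i
      · subst hij; simp
      · rw [if_neg (fun hc => hij (hx hc).symm)]; simp [hij]
  have hli : LinearIndependent ℝ (fun i => (⟨W i, hmem i⟩ : S)) := by
    apply LinearIndependent.of_comp S.subtype
    exact hliW
  exact hli.fintype_card_le_finrank

end RankAux

section Main
open DihedralGroup Stmt18Aux

/-- eigenvalues of the power graph of the dihedral group `D_{2n}`
for `n = p^z` a prime power, `n ≥ 3`. -/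
theorem stmt_18 {α : ℝ} (hα : α ∈ Set.Icc (0 : ℝ) 1)
    (p z n : ℕ) (hp : p.Prime) (hz : 1 ≤ z) (hn : n = p ^ z) (hn3 : 3 ≤ n) [NeZero n] :
    n - 2 ≤ eigMult (Aalpha (powerGraph (DihedralGroup n)) α) (α * (n : ℝ) - 1) ∧
    n - 1 ≤ eigMult (Aalpha (powerGraph (DihedralGroup n)) α) α := by
  classical
  have hone : (1 : ZMod n) ≠ 0 := by
    haveI : Fact (1 < n) := ⟨by omega⟩
    exact one_ne_zero
  have hcastn : ((n - 1 : ℕ) : ℝ) = (n : ℝ) - 1 := by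
    push_cast [Nat.cast_sub (by omega : 1 ≤ n)]; ring
  have expand : ∀ (v : DihedralGroup n → ℝ) (x : DihedralGroup n),
      (Aalpha (powerGraph (DihedralGroup n)) α).mulVec v x
        = α * (((powerGraph (DihedralGroup n)).degree x : ℝ) * v x)
          + (1-α) * ∑ y ∈ (powerGraph (DihedralGroup n)).neighborFinset x, v y := by
    intro v x
    simp [Aalpha, Matrix.add_mulVec, Matrix.smul_mulVec, Matrix.mulVec_diagonal,
      SimpleGraph.adjMatrix_mulVec_apply]
  constructor
  · -- eigenvalue α n - 1, multiplicity ≥ n - 2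
    have hcard : Fintype.card {i : ZMod n // ¬(i = 0 ∨ i = 1)} = n - 2 := by
      rw [Fintype.card_subtype_compl]
      have h2 : Fintype.card {i : ZMod n // i = 0 ∨ i = 1} = 2 := by
        rw [Fintype.card_subtype]
        have h3 : (Finset.univ.filter (fun i : ZMod n => i = 0 ∨ i = 1)) = {0, 1} := by
          ext i; simp
        rw [h3, Finset.card_insert_of_notMem (by simp [hone.symm]), Finset.card_singleton]
      rw [h2, ZMod.card]
    refine le_trans (le_of_eq hcard.symm)
      (rank_aux _ _ (fun i : {i : ZMod n // ¬(i = 0 ∨ i = 1)} => r i.1) (r 1) ?_ ?_ ?_)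
    · intro a b h
      exact Subtype.ext (by simpa using h)
    · intro i h
      exact i.2 (Or.inr (by simpa using h))
    · rintro ⟨i, hi⟩
      push_neg at hi
      obtain ⟨hi0, hi1⟩ := hi
      funext x
      rw [expand]
      simp only [Pi.smul_apply, smul_eq_mul]
      rw [Finset.sum_sub_distrib, Finset.sum_ite_eq' _ (r i) (fun _ => (1:ℝ)),
        Finset.sum_ite_eq' _ (r 1) (fun _ => (1:ℝ))]
      cases x with
      | sr j =>
        simp only [SimpleGraph.mem_neighborFinset, adj_srr, hi0, hone, if_false,
          reduceCtorEq, sub_zero, sub_self, mul_zero]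
        ring
      | r j =>
        simp only [SimpleGraph.mem_neighborFinset, adj_rr p z hp hn,
          DihedralGroup.r.injEq]
        by_cases hj0 : j = 0
        · subst hj0
          rw [if_pos (Ne.symm hi0), if_pos (Ne.symm hone),
            if_neg (Ne.symm hi0), if_neg (Ne.symm hone)]
          ring
        · rw [deg_r p z hp hn j hj0, hcastn]
          by_cases hji : j = i
          · subst hji
            simp only [if_pos rfl, if_neg hi1, ne_eq, not_true_eq_false, if_false,
              if_true, not_false_eq_true]
            rw [if_pos (show ¬j = 1 from hi1)]
            ring
          · by_cases hj1 : j = 1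
            · subst hj1
              simp only [hji, if_false, if_pos rfl, ne_eq, not_false_eq_true, if_true,
                not_true_eq_false]
              ring
            · simp only [hji, hj1, if_false, ne_eq, not_false_eq_true, if_true]
              ring
  · -- eigenvalue α, multiplicity ≥ n - 1
    have hcard : Fintype.card {i : ZMod n // ¬(i = 0)} = n - 1 := by
      rw [Fintype.card_subtype_compl, Fintype.card_subtype_eq, ZMod.card]
    refine le_trans (le_of_eq hcard.symm)
      (rank_aux _ _ (fun i : {i : ZMod n // ¬(i = 0)} => sr i.1) (sr 0) ?_ ?_ ?_)
    · intro a b h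
      exact Subtype.ext (by simpa using h)
    · intro i h
      exact i.2 (by simpa using h)
    · rintro ⟨i, hi⟩
      funext x
      rw [expand]
      simp only [Pi.smul_apply, smul_eq_mul]
      rw [Finset.sum_sub_distrib, Finset.sum_ite_eq' _ (sr i) (fun _ => (1:ℝ)),
        Finset.sum_ite_eq' _ (sr 0) (fun _ => (1:ℝ))]
      cases x with
      | r j =>
        simp only [SimpleGraph.mem_neighborFinset, adj_rsr, reduceCtorEq, if_false,
          sub_zero, sub_self, mul_zero]
        norm_num
      | sr j =>
        rw [deg_sr]
        simp only [SimpleGraph.mem_neighborFinset,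
          if_neg (not_adj_srsr j i), if_neg (not_adj_srsr j 0), DihedralGroup.sr.injEq]
        push_cast
        ring

end Main
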